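/- arXiv:2010.05088 — 2 statements merged into one kernel-verified Lean document; each statement's English description precedes it below -/
import Mathlib

section
/- For every ε > 0, m ≥ 0, and t ∈ εℤ₊, we have Σ_{x∈εℤ} P(x,t,m,ε) = 1. -/
noncomputable section

/-- The `i`-th move of a checker path encoded as `f : Fin n → Bool`
(`true` = upwards-right move `(ε,ε)`, `false` = upwards-left move `(−ε,ε)`);
out-of-range indices default to `true`. -/
def fcStep {n : ℕ} (f : Fin n → Bool) (i : ℕ) : Bool :=
  if h : i < n then f ⟨i, h⟩ else true

/-- The number of turns of the checker path `f`. -/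
def fcTurns {n : ℕ} (f : Fin n → Bool) : ℕ :=
  ((Finset.range (n - 1)).filter fun i => fcStep f i ≠ fcStep f (i + 1)).card

/-- The position (in units of `ε`) of the checker path `f` after `i` moves,
starting from the origin. -/
def fcPos {n : ℕ} (f : Fin n → Bool) (i : ℕ) : ℤ :=
  ∑ j ∈ Finset.range i, (if fcStep f j then (1 : ℤ) else -1)

/-- Checker paths from `(0,0)` to `(εx, εn)` whose first step is to `(ε,ε)`. -/
def fcPaths (n : ℕ) (x : ℤ) : Finset (Fin n → Bool) :=
  Finset.univ.filter fun f =>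
    (∀ i : Fin n, (i : ℕ) = 0 → f i = true) ∧ fcPos f n = x

/-- The amplitude `a(εx, εn, m, ε)`. -/
def fcAmp (m ε : ℝ) (x : ℤ) (n : ℕ) : ℂ :=
  (((1 + m ^ 2 * ε ^ 2) ^ ((1 - (n : ℝ)) / 2) : ℝ) : ℂ) * Complex.I *
    ∑ f ∈ fcPaths n x, (-Complex.I * (m * ε)) ^ fcTurns f

/-- The probability `P(εx, εn, m, ε)` to find the electron at `(εx, εn)`. -/
def fcP (m ε : ℝ) (x : ℤ) (n : ℕ) : ℝ := ‖fcAmp m ε x n‖ ^ 2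

/- ### Auxiliary lemmas -/

lemma fcStep_snoc_lt {n : ℕ} (f : Fin n → Bool) (b : Bool) {i : ℕ} (h : i < n) :
    fcStep (Fin.snoc f b : Fin (n+1) → Bool) i = fcStep f i := by
  have h' : i < n + 1 := Nat.lt_succ_of_lt h
  simp only [fcStep, dif_pos h, dif_pos h']
  have : (⟨i, h'⟩ : Fin (n+1)) = (⟨i, h⟩ : Fin n).castSucc := rfl
  rw [this, Fin.snoc_castSucc]

lemma fcStep_snoc_last {n : ℕ} (f : Fin n → Bool) (b : Bool) :
    fcStep (Fin.snoc f b : Fin (n+1) → Bool) n = b := by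
  have h : n < n + 1 := Nat.lt_succ_self n
  simp only [fcStep, dif_pos h]
  have : (⟨n, h⟩ : Fin (n+1)) = Fin.last n := rfl
  rw [this, Fin.snoc_last]

lemma fcPos_snoc {n : ℕ} (f : Fin n → Bool) (b : Bool) {i : ℕ} (h : i ≤ n) :
    fcPos (Fin.snoc f b : Fin (n+1) → Bool) i = fcPos f i := by
  unfold fcPos
  refine Finset.sum_congr rfl fun j hj => ?_
  rw [fcStep_snoc_lt f b (lt_of_lt_of_le (Finset.mem_range.mp hj) h)]

lemma fcPos_snoc_top {n : ℕ} (f : Fin n → Bool) (b : Bool) :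
    fcPos (Fin.snoc f b : Fin (n+1) → Bool) (n+1)
      = fcPos f n + (if b then (1:ℤ) else -1) := by
  unfold fcPos
  rw [Finset.sum_range_succ, fcStep_snoc_last]
  congr 1
  refine Finset.sum_congr rfl fun j hj => ?_
  rw [fcStep_snoc_lt f b (Finset.mem_range.mp hj)]

lemma fcTurns_snoc {n : ℕ} (f : Fin (n+1) → Bool) (b : Bool) :
    fcTurns (Fin.snoc f b : Fin (n+2) → Bool)
      = fcTurns f + (if fcStep f n ≠ b then 1 else 0) := by
  unfold fcTurns
  rw [Finset.card_filter, Finset.card_filter]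
  simp only [Nat.add_sub_cancel]
  rw [Finset.sum_range_succ]
  congr 1
  · refine Finset.sum_congr rfl fun j hj => ?_
    have hj' := Finset.mem_range.mp hj
    rw [fcStep_snoc_lt f b (Nat.lt_succ_of_lt hj'), fcStep_snoc_lt f b (Nat.succ_lt_succ hj')]
  · rw [fcStep_snoc_lt f b (Nat.lt_succ_self n), fcStep_snoc_last]

/-- partial amplitude: sum over paths of length `n+1` ending at `x` with last step `b`. -/
def fcPS (k : ℂ) (n : ℕ) (x : ℤ) (b : Bool) : ℂ :=
  ∑ f ∈ (fcPaths (n+1) x).filter (fun f => fcStep f n = b), k ^ fcTurns f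

lemma mem_fcPaths {n : ℕ} {f : Fin n → Bool} {x : ℤ} :
    f ∈ fcPaths n x ↔ (∀ i : Fin n, (i : ℕ) = 0 → f i = true) ∧ fcPos f n = x := by
  simp [fcPaths]

lemma fcStep_eq_last {n : ℕ} (f : Fin (n+1) → Bool) :
    fcStep f n = f (Fin.last n) := by simp [fcStep, Fin.last]

lemma fcPS_key (k : ℂ) (n : ℕ) (x : ℤ) (b : Bool) :
    fcPS k (n+1) x b
      = ∑ f ∈ fcPaths (n+1) (x - (if b then 1 else -1)),
          k ^ (fcTurns f + (if fcStep f n ≠ b then 1 else 0)) := by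
  refine Finset.sum_bij' (fun f _ => Fin.init f) (fun f _ => Fin.snoc f b) ?_ ?_ ?_ ?_ ?_
  · intro f hf
    rw [Finset.mem_filter] at hf
    obtain ⟨hf, hlast⟩ := hf
    rw [mem_fcPaths] at hf
    obtain ⟨h0, hpos⟩ := hf
    have hb : f (Fin.last (n+1)) = b := by rw [← fcStep_eq_last f]; exact hlast
    have hsnoc : Fin.snoc (Fin.init f) (f (Fin.last (n+1))) = f := Fin.snoc_init_self f
    rw [mem_fcPaths]
    constructor
    · intro i hi
      show Fin.init f i = true
      have : Fin.init f i = f i.castSucc := rfl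
      rw [this]
      apply h0
      simpa using hi
    · show fcPos (Fin.init f) (n+1) = _
      have e2 : fcPos (Fin.init f) (n+1) = fcPos f (n+1) := by
        conv_rhs => rw [← hsnoc]
        exact (fcPos_snoc _ _ le_rfl).symm
      have e1 : fcPos f (n+2) = fcPos f (n+1) + (if fcStep f (n+1) then (1:ℤ) else -1) :=
        Finset.sum_range_succ _ _
      rw [hlast] at e1
      rw [hpos] at e1
      rw [e2]
      cases b <;> simp at e1 ⊢ <;> omega
  · intro f hf
    rw [mem_fcPaths] at hf
    obtain ⟨h0, hpos⟩ := hf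
    rw [Finset.mem_filter, mem_fcPaths]
    refine ⟨⟨?_, ?_⟩, ?_⟩
    · intro i hi
      show (Fin.snoc f b : Fin (n+2) → Bool) i = true
      have hlt : (i:ℕ) < n + 1 := by
        rw [hi]; omega
      have : i = ((⟨(i:ℕ), hlt⟩ : Fin (n+1)).castSucc) := by apply Fin.ext; rfl
      rw [this, Fin.snoc_castSucc]
      apply h0
      simpa using hi
    · show fcPos (Fin.snoc f b : Fin (n+2) → Bool) (n+2) = x
      rw [fcPos_snoc_top, hpos]
      cases b <;> simp <;> omega
    · show fcStep (Fin.snoc f b : Fin (n+2) → Bool) (n+1) = b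
      exact fcStep_snoc_last f b
  · intro f hf
    rw [Finset.mem_filter] at hf
    have hb : f (Fin.last (n+1)) = b := by rw [← fcStep_eq_last f]; exact hf.2
    show Fin.snoc (Fin.init f) b = f
    rw [← hb]
    exact Fin.snoc_init_self f
  · intro f hf
    show Fin.init (Fin.snoc f b : Fin (n+2) → Bool) = f
    simp
  · intro f hf
    rw [Finset.mem_filter] at hf
    have hb : f (Fin.last (n+1)) = b := by rw [← fcStep_eq_last f]; exact hf.2
    show k ^ fcTurns f = k ^ (fcTurns (Fin.init f) + _)
    conv_lhs => rw [← Fin.snoc_init_self f, hb, fcTurns_snoc]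

lemma fcPS_rec (k : ℂ) (n : ℕ) (x : ℤ) (b : Bool) :
    fcPS k (n+1) x b
      = fcPS k n (x - (if b then 1 else -1)) b
        + k * fcPS k n (x - (if b then 1 else -1)) (!b) := by
  rw [fcPS_key]
  set y : ℤ := x - (if b then 1 else -1)
  rw [← Finset.sum_filter_add_sum_filter_not (fcPaths (n+1) y) (fun f => fcStep f n = b)]
  congr 1
  · unfold fcPS
    refine Finset.sum_congr rfl fun f hf => ?_
    rw [Finset.mem_filter] at hf
    simp [hf.2]
  · unfold fcPS
    rw [Finset.mul_sum]
    have hfe : (fcPaths (n+1) y).filter (fun f => ¬ fcStep f n = b)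
        = (fcPaths (n+1) y).filter (fun f => fcStep f n = !b) := by
      apply Finset.filter_congr
      intro f _
      cases h : fcStep f n <;> cases b <;> simp
    rw [hfe]
    refine Finset.sum_congr rfl fun f hf => ?_
    rw [Finset.mem_filter] at hf
    have : fcStep f n ≠ b := by rw [hf.2]; cases b <;> simp
    rw [if_pos this, pow_add, pow_one]
    ring

/-- recursive amplitude pair: (`.1` = ending right, `.2` = ending left), length `n+1`. -/
def fcW (k : ℂ) : ℕ → ℤ → ℂ × ℂ
  | 0, x => if x = 1 then (1, 0) else 0
  | n+1, x => ((fcW k n (x-1)).1 + k * (fcW k n (x-1)).2,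
               (fcW k n (x+1)).2 + k * (fcW k n (x+1)).1)

lemma fcPaths_one (x : ℤ) :
    fcPaths 1 x = if x = 1 then ({fun _ => true} : Finset (Fin 1 → Bool)) else ∅ := by
  ext f
  rw [mem_fcPaths]
  have hpos : fcPos f 1 = (if f 0 then (1:ℤ) else -1) := by
    simp [fcPos, fcStep, Finset.sum_range_one]
  constructor
  · rintro ⟨h0, hx⟩
    have hf0 : f 0 = true := h0 0 rfl
    rw [hpos, hf0] at hx
    simp only [if_true] at hx
    rw [if_pos hx.symm]
    simp only [Finset.mem_singleton]
    funext i
    have : i = 0 := Subsingleton.elim i 0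
    rw [this, hf0]
  · intro hf
    by_cases hx : x = 1
    · rw [if_pos hx] at hf
      simp only [Finset.mem_singleton] at hf
      subst hf
      subst hx
      refine ⟨fun i _ => rfl, ?_⟩
      rw [hpos]; simp
    · rw [if_neg hx] at hf
      exact absurd hf (Finset.notMem_empty f)

lemma fcPS_zero (k : ℂ) (x : ℤ) (b : Bool) :
    fcPS k 0 x b = if x = 1 ∧ b = true then 1 else 0 := by
  unfold fcPS
  rw [fcPaths_one]
  by_cases hx : x = 1
  · subst hx
    simp only [if_pos rfl, true_and]
    rw [if_pos trivial]
    have hstep : fcStep (fun _ => true : Fin 1 → Bool) 0 = true := by simp [fcStep]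
    cases b
    · rw [Finset.filter_singleton, if_neg (by simp [hstep])]
      simp
    · rw [Finset.filter_singleton, if_pos (by simp [hstep])]
      rw [Finset.sum_singleton]
      have : fcTurns (fun _ => true : Fin 1 → Bool) = 0 := by simp [fcTurns]
      rw [this, pow_zero]
      simp
  · simp [hx]

lemma fcW_eq_fcPS (k : ℂ) : ∀ (n : ℕ) (x : ℤ),
    (fcW k n x).1 = fcPS k n x true ∧ (fcW k n x).2 = fcPS k n x false := by
  intro n
  induction n with
  | zero =>
    intro x
    rw [fcPS_zero, fcPS_zero]
    by_cases hx : x = 1 <;> simp [fcW, hx]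
  | succ n ih =>
    intro x
    constructor
    · show (fcW k n (x-1)).1 + k * (fcW k n (x-1)).2 = _
      rw [(ih (x-1)).1, (ih (x-1)).2, fcPS_rec]
      simp
    · show (fcW k n (x+1)).2 + k * (fcW k n (x+1)).1 = _
      rw [(ih (x+1)).1, (ih (x+1)).2, fcPS_rec]
      norm_num

lemma fcW_support (k : ℂ) : ∀ (n : ℕ) (x : ℤ),
    x ∉ Finset.Icc (-(n:ℤ) - 1) ((n:ℤ) + 1) → fcW k n x = 0 := by
  intro n
  induction n with
  | zero =>
    intro x hx
    simp only [Finset.mem_Icc, not_and_or, not_le] at hx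
    have : x ≠ 1 := by omega
    simp [fcW, this]
  | succ n ih =>
    intro x hx
    simp only [Finset.mem_Icc, not_and_or, not_le] at hx
    have h1 : fcW k n (x-1) = 0 := ih _ (by simp only [Finset.mem_Icc, not_and_or, not_le]; omega)
    have h2 : fcW k n (x+1) = 0 := ih _ (by simp only [Finset.mem_Icc, not_and_or, not_le]; omega)
    show (_, _) = (0 : ℂ × ℂ)
    rw [h1, h2]
    simp [Prod.ext_iff]

lemma fcW_ri {k : ℂ} (hk : k.re = 0) : ∀ (n : ℕ) (x : ℤ),
    (fcW k n x).1.im = 0 ∧ (fcW k n x).2.re = 0 := by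
  intro n
  induction n with
  | zero =>
    intro x
    by_cases hx : x = 1 <;> simp [fcW, hx]
  | succ n ih =>
    intro x
    constructor
    · show ((fcW k n (x-1)).1 + k * (fcW k n (x-1)).2).im = 0
      rw [Complex.add_im, Complex.mul_im, (ih (x-1)).1, (ih (x-1)).2, hk]
      ring
    · show ((fcW k n (x+1)).2 + k * (fcW k n (x+1)).1).re = 0
      rw [Complex.add_re, Complex.mul_re, (ih (x+1)).2, (ih (x+1)).1, hk]
      ring

def fcG (k : ℂ) (n : ℕ) (x : ℤ) : ℝ :=
  Complex.normSq (fcW k n x).1 + Complex.normSq (fcW k n x).2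

lemma fcG_step {k : ℂ} (hk : k.re = 0) (n : ℕ) :
    ∑' x : ℤ, fcG k (n+1) x = (1 + Complex.normSq k) * ∑' x : ℤ, fcG k n x := by
  set A : ℤ → ℝ := fun y => Complex.normSq ((fcW k n y).1 + k * (fcW k n y).2) with hA
  set B : ℤ → ℝ := fun y => Complex.normSq ((fcW k n y).2 + k * (fcW k n y).1) with hB
  have hAsupp : ∀ y ∉ Finset.Icc (-(n:ℤ) - 1) ((n:ℤ) + 1), A y = 0 := by
    intro y hy; simp [hA, fcW_support k n y hy]
  have hBsupp : ∀ y ∉ Finset.Icc (-(n:ℤ) - 1) ((n:ℤ) + 1), B y = 0 := by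
    intro y hy; simp [hB, fcW_support k n y hy]
  have hAsum : Summable A := summable_of_ne_finset_zero hAsupp
  have hBsum : Summable B := summable_of_ne_finset_zero hBsupp
  have hAsum' : Summable (fun x : ℤ => A (x - 1)) := by
    apply summable_of_ne_finset_zero (s := Finset.Icc (-(n:ℤ)) ((n:ℤ) + 2))
    intro x hx
    apply hAsupp
    simp only [Finset.mem_Icc, not_and_or, not_le] at hx ⊢
    omega
  have hBsum' : Summable (fun x : ℤ => B (x + 1)) := by
    apply summable_of_ne_finset_zero (s := Finset.Icc (-(n:ℤ) - 2) ((n:ℤ)))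
    intro x hx
    apply hBsupp
    simp only [Finset.mem_Icc, not_and_or, not_le] at hx ⊢
    omega
  have hg : ∀ x : ℤ, fcG k (n+1) x = A (x - 1) + B (x + 1) := fun x => rfl
  calc ∑' x : ℤ, fcG k (n+1) x
      = ∑' x : ℤ, (A (x - 1) + B (x + 1)) := by exact tsum_congr hg
    _ = (∑' x : ℤ, A (x - 1)) + ∑' x : ℤ, B (x + 1) := Summable.tsum_add hAsum' hBsum'
    _ = (∑' y : ℤ, A y) + ∑' y : ℤ, B y := by
        rw [← (Equiv.subRight (1:ℤ)).tsum_eq A, ← (Equiv.addRight (1:ℤ)).tsum_eq B]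
        rfl
    _ = ∑' y : ℤ, (A y + B y) := (Summable.tsum_add hAsum hBsum).symm
    _ = ∑' y : ℤ, (1 + Complex.normSq k) * fcG k n y := by
        apply tsum_congr
        intro y
        have h1 := (fcW_ri hk n y).1
        have h2 := (fcW_ri hk n y).2
        simp only [hA, hB, fcG, Complex.normSq_apply, Complex.add_re, Complex.add_im,
          Complex.mul_re, Complex.mul_im, h1, h2, hk]
        ring
    _ = (1 + Complex.normSq k) * ∑' y : ℤ, fcG k n y := tsum_mul_left

lemma fcG_total {k : ℂ} (hk : k.re = 0) (n : ℕ) :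
    ∑' x : ℤ, fcG k n x = (1 + Complex.normSq k) ^ n := by
  induction n with
  | zero =>
    have : ∀ x : ℤ, fcG k 0 x = if x = 1 then 1 else 0 := by
      intro x
      by_cases hx : x = 1 <;> simp [fcG, fcW, hx]
    rw [tsum_congr this, tsum_ite_eq]
    simp
  | succ n ih =>
    rw [fcG_step hk n, ih, pow_succ]
    ring

lemma sum_paths_eq (k : ℂ) (n : ℕ) (x : ℤ) :
    ∑ f ∈ fcPaths (n+1) x, k ^ fcTurns f = (fcW k n x).1 + (fcW k n x).2 := by
  rw [(fcW_eq_fcPS k n x).1, (fcW_eq_fcPS k n x).2]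
  unfold fcPS
  rw [← Finset.sum_filter_add_sum_filter_not (fcPaths (n+1) x) (fun f => fcStep f n = true)]
  congr 1
  apply Finset.sum_congr _ fun _ _ => rfl
  apply Finset.filter_congr
  intro f _
  cases h : fcStep f n <;> simp

/-- Probability conservation law: for each `t = εn ∈ εℤ₊`, `Σ_{x∈εℤ} P(x,t,m,ε) = 1`. -/
theorem stmt16 (m ε : ℝ) (hε : 0 < ε) (hm : 0 ≤ m) (n : ℕ) (hn : 0 < n) :
    ∑' X : ℤ, fcP m ε X n = 1 := by
  obtain ⟨nn, rfl⟩ : ∃ nn, n = nn + 1 := ⟨n - 1, by omega⟩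
  set k : ℂ := -Complex.I * ((m:ℂ) * (ε:ℂ)) with hkdef
  have hk : k.re = 0 := by
    simp [hkdef, Complex.mul_re]
  set c : ℝ := (1 + m ^ 2 * ε ^ 2) ^ ((1 - ((nn + 1 : ℕ) : ℝ)) / 2) with hcdef
  have hb : (0:ℝ) < 1 + m ^ 2 * ε ^ 2 := by positivity
  have hc : 0 < c := Real.rpow_pos_of_pos hb _
  have hnormk : Complex.normSq k = m ^ 2 * ε ^ 2 := by
    simp [hkdef, Complex.normSq_apply, Complex.mul_re, Complex.mul_im]
    ring
  have hpoint : ∀ X : ℤ, fcP m ε X (nn + 1) = c ^ 2 * fcG k nn X := by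
    intro X
    unfold fcP fcAmp
    rw [sum_paths_eq, ← hkdef, ← hcdef]
    rw [norm_mul, norm_mul, Complex.norm_I, mul_one, Complex.norm_real, Real.norm_eq_abs, mul_pow,
      _root_.sq_abs, Complex.sq_norm]
    have h1 : (fcW k nn X).1.im = 0 := (fcW_ri hk nn X).1
    have h2 : (fcW k nn X).2.re = 0 := (fcW_ri hk nn X).2
    unfold fcG
    simp only [Complex.normSq_apply, Complex.add_re, Complex.add_im, h1, h2]
    ring
  rw [tsum_congr hpoint, tsum_mul_left, fcG_total hk, hnormk]
  have hpow : (1 + m ^ 2 * ε ^ 2) ^ nn = (1 + m ^ 2 * ε ^ 2) ^ ((nn : ℕ) : ℝ) :=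
    (Real.rpow_natCast _ nn).symm
  have hc2 : c ^ 2 = (1 + m ^ 2 * ε ^ 2) ^ ((1 - ((nn + 1 : ℕ) : ℝ))) := by
    rw [hcdef, ← Real.rpow_natCast ((1 + m ^ 2 * ε ^ 2) ^ ((1 - ((nn + 1 : ℕ) : ℝ)) / 2)) 2,
      ← Real.rpow_mul (le_of_lt hb)]
    norm_num
  rw [hc2, hpow, ← Real.rpow_add hb]
  have : 1 - ((nn + 1 : ℕ) : ℝ) + (nn : ℕ) = 0 := by
    push_cast
    ring
  rw [this, Real.rpow_zero]
end
end

section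
/- For every ε > 0, m ≥ 0, and (x,t) ∈ εℤ² with t > 0: (1) a₁(x,t,m,ε) = a₁(−x,t,m,ε); and (2) (t−x)·a₂(x,t,m,ε) = (t+x−2ε)·a₂(2ε−x,t,m,ε). -/
noncomputable section

namespace Stmt17

def W (m ε : ℝ) : ℂ := -Complex.I * (m * ε)

def ETs (m ε : ℝ) (n : ℕ) (X : ℤ) (b : Bool) : ℂ :=
  ∑ f ∈ (fcPaths n X).filter (fun f => fcStep f (n-1) = b), W m ε ^ fcTurns f

def Gr (m ε : ℝ) (P Q : ℕ) : ℝ :=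
  ∑ k ∈ Finset.range Q, (-(m*ε)^2)^k * ((P-1).choose k) * ((Q-1).choose k)

def Er (m ε : ℝ) (P Q : ℕ) : ℝ :=
  if Q = 0 then 1 else
    ∑ k ∈ Finset.range Q, (-(m*ε)^2)^(k+1) * ((P-1).choose (k+1)) * ((Q-1).choose k)

-- fcStep of snoc
lemma fcStep_snoc {n : ℕ} (f : Fin n → Bool) (b : Bool) (i : ℕ) :
    fcStep (Fin.snoc f b) i = if i = n then b else fcStep f i := by
  unfold fcStep
  rcases lt_trichotomy i n with h | h | h
  · rw [dif_pos (Nat.lt_succ_of_lt h), if_neg h.ne, dif_pos h]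
    have : (⟨i, Nat.lt_succ_of_lt h⟩ : Fin (n+1)) = Fin.castSucc ⟨i, h⟩ := rfl
    rw [this, Fin.snoc_castSucc]
  · subst h
    rw [dif_pos (Nat.lt_succ_self i), if_pos rfl]
    have : (⟨i, Nat.lt_succ_self i⟩ : Fin (i+1)) = Fin.last i := rfl
    rw [this, Fin.snoc_last]
  · rw [dif_neg (by omega), if_neg (by omega), dif_neg (by omega)]

lemma fcPos_snoc_le {n : ℕ} (f : Fin n → Bool) (b : Bool) {i : ℕ} (hi : i ≤ n) :
    fcPos (Fin.snoc f b) i = fcPos f i := by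
  unfold fcPos
  refine Finset.sum_congr rfl fun j hj => ?_
  rw [Finset.mem_range] at hj
  have hjn : j ≠ n := by omega
  rw [fcStep_snoc, if_neg hjn]

lemma fcPos_snoc_top {n : ℕ} (f : Fin n → Bool) (b : Bool) :
    fcPos (Fin.snoc f b) (n+1) = fcPos f n + (if b then 1 else -1) := by
  unfold fcPos
  rw [Finset.sum_range_succ, fcStep_snoc, if_pos rfl]
  congr 1
  exact fcPos_snoc_le f b le_rfl

lemma fcTurns_snoc {n : ℕ} (hn : 1 ≤ n) (f : Fin n → Bool) (b : Bool) :
    fcTurns (Fin.snoc f b) = fcTurns f + (if fcStep f (n-1) = b then 0 else 1) := by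
  unfold fcTurns
  have h1 : (n + 1) - 1 = (n-1) + 1 := by omega
  rw [h1, Finset.range_add_one, Finset.filter_insert]
  have hcongr : (Finset.range (n-1)).filter
      (fun i => fcStep (Fin.snoc f b) i ≠ fcStep (Fin.snoc f b) (i+1)) =
      (Finset.range (n-1)).filter (fun i => fcStep f i ≠ fcStep f (i+1)) := by
    apply Finset.filter_congr
    intro i hi
    rw [Finset.mem_range] at hi
    have h2 : i ≠ n := by omega
    have h3 : i + 1 ≠ n := by omega
    rw [fcStep_snoc, fcStep_snoc, if_neg h2, if_neg h3]
  have hlast1 : fcStep (Fin.snoc f b) (n-1) = fcStep f (n-1) := by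
    rw [fcStep_snoc, if_neg (by omega)]
  have hlast2 : fcStep (Fin.snoc f b) ((n-1)+1) = b := by
    rw [fcStep_snoc, if_pos (by omega)]
  have hc : (fcStep (Fin.snoc f b) (n-1) ≠ fcStep (Fin.snoc f b) ((n-1)+1)) ↔
      ¬(fcStep f (n-1) = b) := by rw [hlast1, hlast2]
  by_cases hb : fcStep f (n-1) = b
  · rw [if_neg (fun h => (hc.mp h) hb), hcongr, if_pos hb, add_zero]
  · rw [if_pos (hc.mpr hb), Finset.card_insert_of_notMem (by simp), hcongr, if_neg hb]

lemma mem_fcPaths_iff {n : ℕ} (X : ℤ) (f : Fin n → Bool) :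
    f ∈ fcPaths n X ↔ (∀ i : Fin n, (i : ℕ) = 0 → f i = true) ∧ fcPos f n = X := by
  simp [fcPaths]

lemma snoc_mem_fcPaths_iff {n : ℕ} (hn : 1 ≤ n) (f : Fin n → Bool) (b : Bool) (X : ℤ) :
    Fin.snoc f b ∈ fcPaths (n+1) X ↔ f ∈ fcPaths n (X - (if b then 1 else -1)) := by
  rw [mem_fcPaths_iff, mem_fcPaths_iff]
  constructor
  · rintro ⟨h0, hpos⟩
    refine ⟨fun i hi => ?_, ?_⟩
    · have := h0 (Fin.castSucc i) (by simpa using hi)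
      rwa [Fin.snoc_castSucc] at this
    · rw [fcPos_snoc_top] at hpos
      omega
  · rintro ⟨h0, hpos⟩
    refine ⟨fun i hi => ?_, ?_⟩
    · have hlt : (i : ℕ) < n := by omega
      have hi' : i = Fin.castSucc ⟨(i : ℕ), hlt⟩ := by
        apply Fin.ext; rfl
      rw [hi', Fin.snoc_castSucc]
      exact h0 _ hi
    · rw [fcPos_snoc_top, hpos]
      omega

lemma fcStep_last {n : ℕ} (f : Fin (n+1) → Bool) : fcStep f n = f (Fin.last n) := by
  unfold fcStep
  rw [dif_pos (Nat.lt_succ_self n)]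
  rfl

lemma snoc_comp_eq {n : ℕ} (b : Bool) (h : Fin (n+1) → Bool) (hb : fcStep h n = b) :
    Fin.snoc (h ∘ Fin.castSucc) b = h := by
  funext x
  refine Fin.lastCases ?_ (fun i => ?_) x
  · rw [Fin.snoc_last, ← hb, fcStep_last]
  · rw [Fin.snoc_castSucc]
    rfl

lemma bool_ne_iff {x b : Bool} : ¬(x = b) ↔ x = !b := by
  cases x <;> cases b <;> simp

lemma ETs_rec (m ε : ℝ) {n : ℕ} (hn : 1 ≤ n) (X : ℤ) (b : Bool) :
    ETs m ε (n+1) X b =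
      ETs m ε n (X - (if b then 1 else -1)) b
        + W m ε * ETs m ε n (X - (if b then 1 else -1)) (!b) := by
  set Y := X - (if b then 1 else -1) with hY
  unfold ETs
  have h1 : ∑ f ∈ (fcPaths (n+1) X).filter (fun f => fcStep f ((n+1)-1) = b), W m ε ^ fcTurns f
      = ∑ f ∈ fcPaths n Y, W m ε ^ (fcTurns f + if fcStep f (n-1) = b then 0 else 1) := by
    apply Finset.sum_nbij' (fun h => h ∘ Fin.castSucc) (fun g => Fin.snoc g b)
    · intro a ha
      rw [Finset.mem_filter] at ha
      have hb' : fcStep a n = b := ha.2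
      have hmem : Fin.snoc (a ∘ Fin.castSucc) b ∈ fcPaths (n+1) X := by
        rw [snoc_comp_eq b a hb']
        exact ha.1
      exact (snoc_mem_fcPaths_iff hn _ b X).mp hmem
    · intro a ha
      rw [Finset.mem_filter]
      refine ⟨(snoc_mem_fcPaths_iff hn a b X).mpr ha, ?_⟩
      show fcStep (Fin.snoc a b) n = b
      rw [fcStep_snoc, if_pos rfl]
    · intro a ha
      rw [Finset.mem_filter] at ha
      exact snoc_comp_eq b a ha.2
    · intro a _
      funext i
      simp [Fin.snoc_castSucc]
    · intro a ha
      rw [Finset.mem_filter] at ha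
      have h3 : fcTurns (Fin.snoc (a ∘ Fin.castSucc) b) = fcTurns a := by
        rw [snoc_comp_eq b a ha.2]
      rw [← h3, fcTurns_snoc hn]
  rw [h1, ← Finset.sum_filter_add_sum_filter_not (fcPaths n Y) (fun f => fcStep f (n-1) = b)]
  congr 1
  · refine Finset.sum_congr rfl fun f hf => ?_
    rw [Finset.mem_filter] at hf
    rw [if_pos hf.2, add_zero]
  · rw [Finset.mul_sum]
    have hfil : (fcPaths n Y).filter (fun f => ¬(fcStep f (n-1) = b))
        = (fcPaths n Y).filter (fun f => fcStep f (n-1) = !b) := by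
      apply Finset.filter_congr
      intro f _
      simp [bool_ne_iff]
    rw [hfil]
    refine Finset.sum_congr rfl fun f hf => ?_
    rw [Finset.mem_filter] at hf
    rw [if_neg (by rw [hf.2]; cases b <;> simp), pow_succ, mul_comm]

lemma fcPos_eq {n : ℕ} (f : Fin n → Bool) :
    fcPos f n = 2 * (((Finset.range n).filter (fun j => fcStep f j = true)).card : ℤ) - n := by
  unfold fcPos
  have h : ∀ j ∈ Finset.range n, (if fcStep f j then (1:ℤ) else -1)
      = 2 * (if fcStep f j = true then (1:ℤ) else 0) - 1 := by
    intro j _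
    by_cases h : fcStep f j = true <;> simp [h]
  rw [Finset.sum_congr rfl h, Finset.sum_sub_distrib, ← Finset.mul_sum, Finset.sum_boole,
    Finset.sum_const, Finset.card_range]
  simp

lemma reach {n : ℕ} (hn : 1 ≤ n) {X : ℤ} (f : Fin n → Bool) (hf : f ∈ fcPaths n X) :
    ∃ P : ℕ, 1 ≤ P ∧ P ≤ n ∧ X = 2 * (P : ℤ) - n := by
  rw [mem_fcPaths_iff] at hf
  refine ⟨((Finset.range n).filter (fun j => fcStep f j = true)).card, ?_, ?_, ?_⟩
  · rw [Nat.one_le_iff_ne_zero, ← Nat.pos_iff_ne_zero, Finset.card_pos]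
    refine ⟨0, ?_⟩
    rw [Finset.mem_filter, Finset.mem_range]
    refine ⟨by omega, ?_⟩
    have h0 : f ⟨0, by omega⟩ = true := hf.1 ⟨0, by omega⟩ rfl
    unfold fcStep
    rw [dif_pos (by omega : 0 < n)]
    exact h0
  · exact le_trans (Finset.card_filter_le _ _) (by rw [Finset.card_range])
  · rw [← hf.2, fcPos_eq]

lemma fcPaths_empty {n : ℕ} (hn : 1 ≤ n) {X : ℤ}
    (h : ∀ P : ℕ, 1 ≤ P → P ≤ n → X ≠ 2 * (P : ℤ) - n) : fcPaths n X = ∅ := by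
  rw [Finset.eq_empty_iff_forall_notMem]
  intro f hf
  obtain ⟨P, h1, h2, h3⟩ := reach hn f hf
  exact h P h1 h2 h3

lemma ETs_zero (m ε : ℝ) {n : ℕ} {X : ℤ} (h : fcPaths n X = ∅) (b : Bool) :
    ETs m ε n X b = 0 := by
  unfold ETs
  rw [h]
  simp

lemma fcPaths_one (X : ℤ) :
    fcPaths 1 X = if X = 1 then {fun _ => true} else (∅ : Finset (Fin 1 → Bool)) := by
  ext f
  rw [mem_fcPaths_iff]
  have hstep0 : fcStep f 0 = f ⟨0, Nat.one_pos⟩ := by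
    unfold fcStep; rw [dif_pos Nat.one_pos]
  constructor
  · rintro ⟨h0, hpos⟩
    have hf0 : f ⟨0, Nat.one_pos⟩ = true := h0 _ rfl
    have hX : X = 1 := by
      rw [← hpos]
      unfold fcPos
      rw [Finset.sum_range_one, hstep0, hf0, if_pos rfl]
    rw [if_pos hX, Finset.mem_singleton]
    funext i
    have : i = ⟨0, Nat.one_pos⟩ := by
      apply Fin.ext
      omega
    rw [this, hf0]
  · intro hf
    by_cases hX : X = 1
    · rw [if_pos hX, Finset.mem_singleton] at hf
      subst hf
      refine ⟨fun i _ => rfl, ?_⟩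
      unfold fcPos
      rw [Finset.sum_range_one, hstep0, if_pos rfl, hX]
    · rw [if_neg hX] at hf
      exact absurd hf (Finset.notMem_empty f)

lemma ETs_one_true (m ε : ℝ) (X : ℤ) :
    ETs m ε 1 X true = if X = 1 then 1 else 0 := by
  unfold ETs
  rw [fcPaths_one]
  by_cases hX : X = 1
  · rw [if_pos hX, if_pos hX]
    rw [Finset.filter_singleton, if_pos (by unfold fcStep; rw [dif_pos Nat.one_pos])]
    rw [Finset.sum_singleton]
    have : fcTurns (fun _ : Fin 1 => true) = 0 := by
      unfold fcTurns
      simp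
    rw [this, pow_zero]
  · rw [if_neg hX, if_neg hX]
    simp

lemma ETs_one_false (m ε : ℝ) (X : ℤ) : ETs m ε 1 X false = 0 := by
  unfold ETs
  rw [fcPaths_one]
  by_cases hX : X = 1
  · rw [if_pos hX]
    rw [Finset.filter_singleton, if_neg (by unfold fcStep; rw [dif_pos Nat.one_pos]; simp)]
    simp
  · rw [if_neg hX]
    simp

lemma Gr_zero (m ε : ℝ) (P : ℕ) : Gr m ε P 0 = 0 := by simp [Gr]

lemma Er_zero (m ε : ℝ) (P : ℕ) : Er m ε P 0 = 1 := by simp [Er]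

lemma Er_one (m ε : ℝ) {Q : ℕ} (hQ : 1 ≤ Q) : Er m ε 1 Q = 0 := by
  rw [Er, if_neg (by omega)]
  apply Finset.sum_eq_zero
  intro k _
  rw [show (1:ℕ) - 1 = 0 from rfl, Nat.choose_eq_zero_of_lt (Nat.succ_pos k)]
  simp

lemma ErRec (m ε : ℝ) {P : ℕ} (Q : ℕ) (hP : 2 ≤ P) :
    Er m ε P Q = Er m ε (P-1) Q + (-(m*ε)^2) * Gr m ε (P-1) Q := by
  rcases Nat.eq_zero_or_pos Q with hQ | hQ
  · subst hQ
    rw [Er_zero, Er_zero, Gr_zero, mul_zero, add_zero]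
  · rw [Er, Er, if_neg (by omega), if_neg (by omega), Gr, Finset.mul_sum,
      ← Finset.sum_add_distrib]
    refine Finset.sum_congr rfl fun k _ => ?_
    have h1 : P - 1 = (P - 2) + 1 := by omega
    have h2 : P - 1 - 1 = P - 2 := by omega
    rw [h2, h1, Nat.choose_succ_succ]
    push_cast
    ring

lemma GrRec (m ε : ℝ) (P : ℕ) {Q : ℕ} (hQ : 1 ≤ Q) :
    Gr m ε P Q = Gr m ε P (Q-1) + Er m ε P (Q-1) := by
  obtain ⟨q, rfl⟩ : ∃ q, Q = q + 1 := ⟨Q - 1, by omega⟩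
  rw [show q + 1 - 1 = q from rfl]
  rcases Nat.eq_zero_or_pos q with hq | hq
  · subst hq
    simp [Gr, Er]
  obtain ⟨r, rfl⟩ : ∃ r, q = r + 1 := ⟨q - 1, by omega⟩
  have hA : Er m ε P (r+1) = ∑ k ∈ Finset.range (r+1),
      (-(m*ε)^2)^(k+1) * ((P-1).choose (k+1)) * (r.choose k) := by
    rw [Er, if_neg (by omega)]
    norm_num
  have hB : Gr m ε P (r+1) = (∑ k ∈ Finset.range r,
      (-(m*ε)^2)^(k+1) * ((P-1).choose (k+1)) * (r.choose (k+1))) + 1 := by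
    rw [Gr, Finset.sum_range_succ']
    simp
  have hL : Gr m ε P (r+1+1) = (∑ k ∈ Finset.range (r+1),
      (-(m*ε)^2)^(k+1) * ((P-1).choose (k+1)) * ((r+1).choose (k+1))) + 1 := by
    rw [Gr, Finset.sum_range_succ']
    simp
  rw [hL, hA, hB]
  have hsplit : ∑ k ∈ Finset.range (r+1),
      (-(m*ε)^2)^(k+1) * (((P-1).choose (k+1) : ℕ) : ℝ) * (((r+1).choose (k+1) : ℕ) : ℝ)
      = (∑ k ∈ Finset.range (r+1), (-(m*ε)^2)^(k+1) * ((P-1).choose (k+1)) * (r.choose k))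
        + ∑ k ∈ Finset.range (r+1),
            (-(m*ε)^2)^(k+1) * ((P-1).choose (k+1)) * (r.choose (k+1)) := by
    rw [← Finset.sum_add_distrib]
    refine Finset.sum_congr rfl fun k _ => ?_
    rw [Nat.choose_succ_succ]
    push_cast
    ring
  rw [hsplit, Finset.sum_range_succ
      (f := fun k => (-(m*ε)^2)^(k+1) * (((P-1).choose (k+1) : ℕ) : ℝ) * (r.choose (k+1))),
    Nat.choose_eq_zero_of_lt (Nat.lt_succ_self r)]
  push_cast
  ring

lemma Gr_eq_sum (m ε : ℝ) {P Q N : ℕ} (hQ : 1 ≤ Q) (hN : Q ≤ N) :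
    Gr m ε P Q = ∑ k ∈ Finset.range N,
      (-(m*ε)^2)^k * ((P-1).choose k) * ((Q-1).choose k) := by
  rw [Gr]
  apply Finset.sum_subset (Finset.range_subset_range.mpr hN)
  intro k _ hk
  rw [Finset.mem_range, not_lt] at hk
  rw [Nat.choose_eq_zero_of_lt (by omega : Q - 1 < k)]
  simp

lemma Er_eq_sum (m ε : ℝ) {P Q N : ℕ} (hQ : 1 ≤ Q) (hN : Q ≤ N) :
    Er m ε P Q = ∑ k ∈ Finset.range N,
      (-(m*ε)^2)^(k+1) * ((P-1).choose (k+1)) * ((Q-1).choose k) := by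
  rw [Er, if_neg (by omega)]
  apply Finset.sum_subset (Finset.range_subset_range.mpr hN)
  intro k _ hk
  rw [Finset.mem_range, not_lt] at hk
  rw [Nat.choose_eq_zero_of_lt (by omega : Q - 1 < k)]
  simp

lemma Gr_symm (m ε : ℝ) {P Q : ℕ} (hP : 1 ≤ P) (hQ : 1 ≤ Q) :
    Gr m ε P Q = Gr m ε Q P := by
  rw [Gr_eq_sum m ε hQ (by omega : Q ≤ P + Q), Gr_eq_sum m ε hP (by omega : P ≤ P + Q)]
  refine Finset.sum_congr rfl fun k _ => ?_
  ring

lemma Er_weight (m ε : ℝ) {P : ℕ} (Q : ℕ) (hP : 1 ≤ P) :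
    (Q : ℝ) * Er m ε P Q = ((P : ℝ) - 1) * Er m ε (Q+1) (P-1) := by
  rcases Nat.eq_zero_or_pos Q with hQ | hQ
  · subst hQ
    rcases Nat.lt_or_ge P 2 with hP2 | hP2
    · have : P = 1 := by omega
      subst this
      simp
    · rw [Er_one m ε (by omega : 1 ≤ P - 1), Nat.cast_zero, zero_mul, mul_zero]
  · rcases Nat.lt_or_ge P 2 with hP2 | hP2
    · have : P = 1 := by omega
      subst this
      rw [Er_one m ε hQ]
      simp
    · rw [Er_eq_sum m ε hQ (by omega : Q ≤ P + Q),
        Er_eq_sum m ε (by omega : 1 ≤ P - 1) (by omega : P - 1 ≤ P + Q),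
        Finset.mul_sum, Finset.mul_sum]
      refine Finset.sum_congr rfl fun k _ => ?_
      have h1 : Q * ((Q-1).choose k) = Q.choose (k+1) * (k+1) := by
        have := Nat.add_one_mul_choose_eq (Q-1) k
        simpa [Nat.succ_eq_add_one, show Q - 1 + 1 = Q by omega] using this
      have h2 : (P-1) * ((P-2).choose k) = ((P-1).choose (k+1)) * (k+1) := by
        have := Nat.add_one_mul_choose_eq (P-2) k
        simpa [Nat.succ_eq_add_one, show P - 2 + 1 = P - 1 by omega] using this
      have h1' : (Q : ℝ) * ((Q-1).choose k) = (Q.choose (k+1)) * ((k:ℝ)+1) := by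
        exact_mod_cast congrArg (Nat.cast : ℕ → ℝ) h1
      have h2' : ((P:ℝ) - 1) * ((P-2).choose k) = ((P-1).choose (k+1)) * ((k:ℝ)+1) := by
        rw [show (P:ℝ) - 1 = ((P - 1 : ℕ) : ℝ) by rw [Nat.cast_sub (by omega : 1 ≤ P)]; simp]
        exact_mod_cast congrArg (Nat.cast : ℕ → ℝ) h2
      have hidx2 : P - 1 - 1 = P - 2 := by omega
      rw [show Q + 1 - 1 = Q from rfl, hidx2]
      linear_combination ((-(m*ε)^2)^(k+1) * (((P-1).choose (k+1) : ℕ) : ℝ)) * h1'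
        - ((-(m*ε)^2)^(k+1) * ((Q.choose (k+1) : ℕ) : ℝ)) * h2'

lemma W_sq (m ε : ℝ) : W m ε * W m ε = ((-(m*ε)^2 : ℝ) : ℂ) := by
  unfold W
  have h : Complex.I * Complex.I = -1 := Complex.I_mul_I
  push_cast
  linear_combination (((m:ℂ)*ε)^2) * h

lemma main (m ε : ℝ) : ∀ n : ℕ, ∀ P Q : ℕ, 1 ≤ P → P + Q = n →
    ETs m ε n ((P:ℤ) - Q) true = ((Er m ε P Q : ℝ) : ℂ) ∧
    ETs m ε n ((P:ℤ) - Q) false = W m ε * ((Gr m ε P Q : ℝ) : ℂ) := by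
  intro n
  induction n using Nat.strong_induction_on with
  | _ n IH =>
    intro P Q hP hPQ
    rcases Nat.lt_or_ge n 2 with h2 | h2
    · have hn1 : n = 1 := by omega
      have hP1 : P = 1 := by omega
      have hQ0 : Q = 0 := by omega
      subst hn1; subst hP1; subst hQ0
      constructor
      · norm_num [ETs_one_true, Er_zero]
      · norm_num [ETs_one_false, Gr_zero]
    · obtain ⟨k, rfl⟩ : ∃ k, n = k + 1 := ⟨n-1, by omega⟩
      have hk : 1 ≤ k := by omega
      constructor
      · rw [ETs_rec m ε hk]
        rw [show (if (true:Bool) = true then (1:ℤ) else -1) = 1 from rfl,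
          Bool.not_true]
        rcases Nat.lt_or_ge P 2 with hP2 | hP2
        · have hP1 : P = 1 := by omega
          subst hP1
          have hQk : Q = k := by omega
          have hempty : fcPaths k (((1:ℕ):ℤ) - Q - 1) = ∅ := by
            apply fcPaths_empty hk
            intro P' h1' h2' hcontr
            omega
          rw [ETs_zero m ε hempty, ETs_zero m ε hempty,
            Er_one m ε (by omega : 1 ≤ Q)]
          norm_num
        · have hco : (P:ℤ) - Q - 1 = ((P-1 : ℕ) : ℤ) - (Q:ℕ) := by omega
          rw [hco]
          obtain ⟨ih1, ih2⟩ := IH k (by omega) (P-1) Q (by omega) (by omega)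
          rw [ih1, ih2, ErRec m ε Q hP2, ← mul_assoc, W_sq]
          push_cast
          ring
      · rw [ETs_rec m ε hk]
        rw [show (if (false:Bool) = true then (1:ℤ) else -1) = -1 from rfl,
          Bool.not_false]
        rcases Nat.eq_zero_or_pos Q with hQ0 | hQ1
        · subst hQ0
          have hempty : fcPaths k ((P:ℤ) - (0:ℕ) - (-1)) = ∅ := by
            apply fcPaths_empty hk
            intro P' h1' h2' hcontr
            omega
          rw [ETs_zero m ε hempty, ETs_zero m ε hempty, Gr_zero]
          norm_num
        · have hco : (P:ℤ) - Q - (-1) = ((P:ℕ):ℤ) - ((Q-1 : ℕ):ℤ) := by omega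
          rw [hco]
          obtain ⟨ih1, ih2⟩ := IH k (by omega) P (Q-1) hP (by omega)
          rw [ih1, ih2, GrRec m ε P hQ1]
          push_cast
          ring

lemma amp_split (m ε : ℝ) (X : ℤ) (n : ℕ) :
    fcAmp m ε X n = (((1 + m ^ 2 * ε ^ 2) ^ ((1 - (n : ℝ)) / 2) : ℝ) : ℂ) * Complex.I *
      (ETs m ε n X true + ETs m ε n X false) := by
  unfold fcAmp ETs W
  rw [← Finset.sum_filter_add_sum_filter_not (fcPaths n X) (fun f => fcStep f (n-1) = true)]
  congr 2
  refine Finset.sum_congr ?_ fun _ _ => rfl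
  apply Finset.filter_congr
  intro f _
  simp only [Bool.not_eq_true]

lemma fcAmp_zero (m ε : ℝ) {n : ℕ} {X : ℤ} (h : fcPaths n X = ∅) :
    fcAmp m ε X n = 0 := by
  unfold fcAmp
  rw [h]
  simp

lemma amp_re_im (m ε : ℝ) {n : ℕ} {P Q : ℕ} (hP : 1 ≤ P) (hPQ : P + Q = n) :
    (fcAmp m ε ((P:ℤ) - Q) n).re
      = (1 + m ^ 2 * ε ^ 2) ^ ((1 - (n : ℝ)) / 2) * (m * ε) * Gr m ε P Q ∧
    (fcAmp m ε ((P:ℤ) - Q) n).im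
      = (1 + m ^ 2 * ε ^ 2) ^ ((1 - (n : ℝ)) / 2) * Er m ε P Q := by
  obtain ⟨h1, h2⟩ := main m ε n P Q hP hPQ
  rw [amp_split, h1, h2]
  unfold W
  constructor <;>
    simp [Complex.mul_re, Complex.mul_im, Complex.add_re, Complex.add_im,
      Complex.I_re, Complex.I_im, Complex.ofReal_re, Complex.ofReal_im] <;>
    ring

end Stmt17

/-- Symmetry: for a lattice point `(x,t) = (εX, εn)` with `t > 0`,
`a₁(x,t,m,ε) = a₁(−x,t,m,ε)` and `(t−x)·a₂(x,t,m,ε) = (t+x−2ε)·a₂(2ε−x,t,m,ε)`. -/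
theorem stmt17 (m ε : ℝ) (hε : 0 < ε) (hm : 0 ≤ m) (x t : ℝ) (X : ℤ) (n : ℕ)
    (hx : x = ε * X) (ht : t = ε * n) (hn : 0 < n) :
    (fcAmp m ε X n).re = (fcAmp m ε (-X) n).re ∧
    (t - x) * (fcAmp m ε X n).im = (t + x - 2 * ε) * (fcAmp m ε (2 - X) n).im := by
  subst hx ht
  by_cases hreach : ∃ P : ℕ, 1 ≤ P ∧ P ≤ n ∧ X = 2 * (P:ℤ) - n
  · obtain ⟨P, hP1, hPn, hX⟩ := hreach
    obtain ⟨Q, hPQ⟩ : ∃ Q : ℕ, P + Q = n := ⟨n - P, by omega⟩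
    have hXPQ : X = (P:ℤ) - (Q:ℤ) := by omega
    obtain ⟨hre, him⟩ := Stmt17.amp_re_im m ε hP1 hPQ
    constructor
    · rw [hXPQ, hre]
      rcases Nat.eq_zero_or_pos Q with hQ0 | hQ1
      · subst hQ0
        have hempty : fcPaths n (-((P:ℤ) - (0:ℕ))) = ∅ := by
          apply Stmt17.fcPaths_empty (by omega)
          intro P' h1 h2 hcontr
          omega
        rw [Stmt17.fcAmp_zero m ε hempty, Stmt17.Gr_zero, mul_zero]
        simp
      · rw [show -((P:ℤ) - (Q:ℤ)) = ((Q:ℤ) - (P:ℤ)) by ring]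
        obtain ⟨hre2, _⟩ := Stmt17.amp_re_im m ε hQ1 (by omega : Q + P = n)
        rw [hre2, Stmt17.Gr_symm m ε hP1 hQ1]
    · rw [hXPQ, him]
      rw [show (2:ℤ) - ((P:ℤ) - (Q:ℤ)) = ((Q+1:ℕ):ℤ) - ((P-1:ℕ):ℤ) by omega]
      obtain ⟨_, him2⟩ := Stmt17.amp_re_im m ε (by omega : 1 ≤ Q+1)
        (by omega : (Q+1) + (P-1) = n)
      rw [him2]
      have hw := Stmt17.Er_weight m ε Q hP1
      have hn' : (n:ℝ) = (P:ℝ) + (Q:ℝ) := by exact_mod_cast congrArg (Nat.cast : ℕ → ℝ) hPQ.symm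
      push_cast
      linear_combination (2 * ε * ((1 + m ^ 2 * ε ^ 2) ^ ((1 - (n : ℝ)) / 2))) * hw
        + (ε * ((1 + m ^ 2 * ε ^ 2) ^ ((1 - (n : ℝ)) / 2))
            * (Stmt17.Er m ε P Q - Stmt17.Er m ε (Q+1) (P-1))) * hn'
  · push_neg at hreach
    have hempX : fcPaths n X = ∅ :=
      Stmt17.fcPaths_empty (by omega) (fun P h1 h2 => hreach P h1 h2)
    have hampX : fcAmp m ε X n = 0 := Stmt17.fcAmp_zero m ε hempX
    constructor
    · by_cases hXn : X = -(n:ℤ)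
      · rw [hampX, hXn, show -(-(n:ℤ)) = ((n:ℕ):ℤ) - ((0:ℕ):ℤ) by omega]
        obtain ⟨hre2, _⟩ := Stmt17.amp_re_im m ε (show 1 ≤ n by omega)
          (show n + 0 = n by omega)
        rw [hre2, Stmt17.Gr_zero, mul_zero]
        simp
      · have hemp3 : fcPaths n (-X) = ∅ := by
          apply Stmt17.fcPaths_empty (by omega)
          intro P' h1 h2 hcontr
          rcases eq_or_lt_of_le h2 with he | hlt
          · exact hXn (by omega)
          · exact hreach (n - P') (by omega) (by omega) (by omega)
        rw [hampX, Stmt17.fcAmp_zero m ε hemp3]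
    · have hemp2 : fcPaths n (2 - X) = ∅ := by
        apply Stmt17.fcPaths_empty (by omega)
        intro P' h1 h2 hcontr
        exact hreach (n+1-P') (by omega) (by omega) (by omega)
      rw [hampX, Stmt17.fcAmp_zero m ε hemp2]
      simp
end
end
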